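/- The elegant joint measurement satisfies the three-ebit localizability condition: for all a₁, a₂, b ∈ {0,X,Y,Z}, the matrix (M_EJM†(I₂⊗σ_b)M_EJM)·(σ_{a₁}⊗σ_{a₂})·(M_EJM†(I₂⊗σ_b)M_EJM) is a permutation matrix with phases. -/

import Mathlib

open Matrix Complex Kronecker

noncomputable section

/-- The identification of `Fin 2 × Fin 2` with `Fin 4`, ordering pairs as 00,01,10,11. -/
def pairEquiv : Fin 2 × Fin 2 ≃ Fin 4 where
  toFun p := ⟨2 * p.1.val + p.2.val, by have h1 := p.1.isLt; have h2 := p.2.isLt; omega⟩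
  invFun k := (⟨k.val / 2, by have := k.isLt; omega⟩, ⟨k.val % 2, by omega⟩)
  left_inv := by decide
  right_inv := by decide

/-- Kronecker product of two 2×2 matrices, as a 4×4 matrix indexed by `Fin 4`
with the ordering 00,01,10,11. -/
def kron (A B : Matrix (Fin 2) (Fin 2) ℂ) : Matrix (Fin 4) (Fin 4) ℂ :=
  Matrix.reindex pairEquiv pairEquiv (A ⊗ₖ B)

def σX : Matrix (Fin 2) (Fin 2) ℂ := !![0, 1; 1, 0]
def σY : Matrix (Fin 2) (Fin 2) ℂ := !![0, -Complex.I; Complex.I, 0]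
def σZ : Matrix (Fin 2) (Fin 2) ℂ := !![1, 0; 0, -1]

/-- The Pauli matrices indexed as σ₀ = I₂, σ₁ = σ_X, σ₂ = σ_Y, σ₃ = σ_Z. -/
def pauli (a : Fin 4) : Matrix (Fin 2) (Fin 2) ℂ :=
  if a = 0 then 1 else if a = 1 then σX else if a = 2 then σY else σZ

/-- A 4×4 complex matrix is a permutation matrix with phases if there is a permutation
`π` of the indices and unit-modulus phases `φ j` with `P (π j) j = φ j` and all other
entries zero. -/
def PermPhase (P : Matrix (Fin 4) (Fin 4) ℂ) : Prop :=
  ∃ (π : Equiv.Perm (Fin 4)) (φ : Fin 4 → ℂ),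
    (∀ j, ‖φ j‖ = 1) ∧ ∀ i j, P i j = if i = π j then φ j else 0

/-- `M` satisfies the three-ebit localizability condition. -/
def ThreeEbitLocal (M : Matrix (Fin 4) (Fin 4) ℂ) : Prop :=
  ∀ a₁ a₂ b : Fin 4,
    PermPhase ((Mᴴ * kron 1 (pauli b) * M) * kron (pauli a₁) (pauli a₂) *
      (Mᴴ * kron 1 (pauli b) * M))

/-- The elegant joint measurement. -/
def M_EJM : Matrix (Fin 4) (Fin 4) ℂ :=
  ((Real.sqrt 8 : ℂ))⁻¹ •
    !![1 + Complex.I, -1 + Complex.I, 1 - Complex.I, -1 - Complex.I;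
       -(2 * Complex.I), 0, 0, -(2 * Complex.I);
       0, 2 * Complex.I, 2 * Complex.I, 0;
       1 - Complex.I, -1 - Complex.I, 1 + Complex.I, -1 + Complex.I]

/-! ### Auxiliary development over the Gaussian integers -/

/-- The integer matrix `√8 · M_EJM`. -/
def Nz : Matrix (Fin 4) (Fin 4) GaussianInt :=
  !![⟨1,1⟩, ⟨-1,1⟩, ⟨1,-1⟩, ⟨-1,-1⟩;
     ⟨0,-2⟩, 0, 0, ⟨0,-2⟩;
     0, ⟨0,2⟩, ⟨0,2⟩, 0;
     ⟨1,-1⟩, ⟨-1,-1⟩, ⟨1,1⟩, ⟨-1,1⟩]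

/-- Pauli matrices over the Gaussian integers. -/
def pauliZ (a : Fin 4) : Matrix (Fin 2) (Fin 2) GaussianInt :=
  if a = 0 then 1 else if a = 1 then !![0, 1; 1, 0]
  else if a = 2 then !![0, ⟨0,-1⟩; ⟨0,1⟩, 0] else !![1, 0; 0, -1]

/-- Kronecker product over the Gaussian integers. -/
def kronZ (A B : Matrix (Fin 2) (Fin 2) GaussianInt) : Matrix (Fin 4) (Fin 4) GaussianInt :=
  Matrix.reindex pairEquiv pairEquiv (A ⊗ₖ B)

def Bz (b : Fin 4) : Matrix (Fin 4) (Fin 4) GaussianInt :=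
  Nzᴴ * kronZ 1 (pauliZ b) * Nz

def Qz (a₁ a₂ b : Fin 4) : Matrix (Fin 4) (Fin 4) GaussianInt :=
  Bz b * kronZ (pauliZ a₁) (pauliZ a₂) * Bz b

/-- Integer-level permutation-with-phases condition: each column has a single nonzero
entry equal to `±64` or `±64i`. -/
def IntCond (Q : Matrix (Fin 4) (Fin 4) GaussianInt) : Prop :=
  ∃ π : Equiv.Perm (Fin 4), ∀ i j,
    (i = π j → Q i j = ⟨64,0⟩ ∨ Q i j = ⟨-64,0⟩ ∨ Q i j = ⟨0,64⟩ ∨ Q i j = ⟨0,-64⟩) ∧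
    (i ≠ π j → Q i j = 0)

lemma pauli_eq (a : Fin 4) : pauli a = (pauliZ a).map GaussianInt.toComplex := by
  fin_cases a <;>
  · ext i j
    fin_cases i <;> fin_cases j <;>
      simp [pauli, pauliZ, σX, σY, σZ, Matrix.map_apply, Matrix.one_apply,
        GaussianInt.toComplex_def']

lemma kron_eq (A B : Matrix (Fin 2) (Fin 2) GaussianInt) :
    kron (A.map GaussianInt.toComplex) (B.map GaussianInt.toComplex) =
      (kronZ A B).map GaussianInt.toComplex := by
  ext i j
  simp [kron, kronZ, Matrix.map_apply, Matrix.kroneckerMap_apply]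

set_option maxRecDepth 8000 in
lemma M_eq : M_EJM = ((Real.sqrt 8 : ℂ))⁻¹ • Nz.map GaussianInt.toComplex := by
  unfold M_EJM
  congr 1
  ext i j
  fin_cases i <;> fin_cases j <;>
    · simp [Nz, Matrix.map_apply, GaussianInt.toComplex_def']
      try ring

lemma MH_eq : M_EJMᴴ = ((Real.sqrt 8 : ℂ))⁻¹ • Nzᴴ.map GaussianInt.toComplex := by
  rw [M_eq, Matrix.conjTranspose_smul,
    Matrix.conjTranspose_map GaussianInt.toComplex (fun x => (GaussianInt.toComplex_star x))]
  congr 1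
  rw [star_inv₀, Complex.star_def, Complex.conj_ofReal]

lemma sqrt8_sq : ((Real.sqrt 8 : ℂ))⁻¹ * ((Real.sqrt 8 : ℂ))⁻¹ = (8 : ℂ)⁻¹ := by
  rw [← mul_inv, ← Complex.ofReal_mul, Real.mul_self_sqrt (by norm_num),
    Complex.ofReal_ofNat]

lemma B_eq (b : Fin 4) :
    M_EJMᴴ * kron 1 (pauli b) * M_EJM = (8 : ℂ)⁻¹ • (Bz b).map GaussianInt.toComplex := by
  have h1 : (1 : Matrix (Fin 2) (Fin 2) ℂ) =
      (1 : Matrix (Fin 2) (Fin 2) GaussianInt).map GaussianInt.toComplex := by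
    rw [Matrix.map_one _ (map_zero _) (map_one _)]
  rw [MH_eq, M_eq, pauli_eq, h1, kron_eq, Matrix.smul_mul, Matrix.smul_mul, Matrix.mul_smul,
    smul_smul, sqrt8_sq, ← Matrix.map_mul, ← Matrix.map_mul, Bz]

lemma P_eq (a₁ a₂ b : Fin 4) :
    (M_EJMᴴ * kron 1 (pauli b) * M_EJM) * kron (pauli a₁) (pauli a₂) *
        (M_EJMᴴ * kron 1 (pauli b) * M_EJM) =
      (64 : ℂ)⁻¹ • (Qz a₁ a₂ b).map GaussianInt.toComplex := by
  rw [B_eq, pauli_eq, pauli_eq, kron_eq, Matrix.smul_mul, Matrix.smul_mul, Matrix.mul_smul,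
    smul_smul, ← Matrix.map_mul, ← Matrix.map_mul, Qz]
  norm_num

lemma permPhase_of_intCond (Q : Matrix (Fin 4) (Fin 4) GaussianInt) (h : IntCond Q) :
    PermPhase ((64 : ℂ)⁻¹ • Q.map GaussianInt.toComplex) := by
  obtain ⟨π, h⟩ := h
  refine ⟨π, fun j => (64 : ℂ)⁻¹ * GaussianInt.toComplex (Q (π j) j), fun j => ?_, fun i j => ?_⟩
  · show ‖(64 : ℂ)⁻¹ * GaussianInt.toComplex (Q (π j) j)‖ = 1
    rcases (h (π j) j).1 rfl with h' | h' | h' | h' <;>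
      rw [h'] <;>
      simp [GaussianInt.toComplex_def', _root_.map_mul, map_inv₀, map_neg,
        Complex.norm_I]
  · by_cases hij : i = π j
    · subst hij
      simp [Matrix.smul_apply, Matrix.map_apply, smul_eq_mul]
    · simp [Matrix.smul_apply, Matrix.map_apply, hij, (h i j).2 hij]

instance (Q : Matrix (Fin 4) (Fin 4) GaussianInt) : Decidable (IntCond Q) := by
  unfold IntCond; haveI : ∀ i j (x : GaussianInt), Decidable (Q i j = x) := fun i j x => decEq _ _; infer_instance

lemma intCond_all : ∀ a₁ a₂ b : Fin 4, IntCond (Qz a₁ a₂ b) := by decide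

/-- The elegant joint measurement satisfies the three-ebit localizability condition. -/
theorem ejm_three_ebit_condition : ThreeEbitLocal M_EJM := by
  intro a₁ a₂ b
  rw [P_eq]
  exact permPhase_of_intCond _ (intCond_all a₁ a₂ b)
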